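/- Let A = [[0,1,0],[0,0,1],[0,0,0]] ∈ ℝ^{3×3}, b = (0,0,1)ᵀ, c = (1,0,0)ᵀ, d = (0,1,0)ᵀ, and l(ω) = (3ω, 3ω², ω³)ᵀ. Fix p ≥ 2, ω₁ > 0, α > 1, set ω_j = α^{j−1}·ω₁ and l_j = l(ω_j). Let b̂ ≠ 0, let μ, n, e, F* : ℝ → ℝ with e twice differentiable, F* differentiable, e'' = F* − b̂μ, z = (e, e', F*)ᵀ, y = e − n, and let ξ₁, …, ξ_p : ℝ → ℝ³ be differentiable and satisfy ξ₁' = Aξ₁ − d·b̂μ + l₁(y − cᵀξ₁) and ξ_i' = Aξ_i + d·(−b̂μ + bᵀ∑_{j=1}^{i−1} ξ_j) + l_i·cᵀ(ξ_{i−1} − ξ_i) for i = 2, …, p. Define ζ̃_i = z − ξ_i − b·(bᵀ∑_{j=1}^{i−1} ξ_j). Then for every i ∈ {2, …, p}: ζ̃_i'(t) = (A − l_i·cᵀ)·ζ̃_i(t) + (l_i − b·(bᵀl_{i−1}))·cᵀζ̃_{i−1}(t) − b·∑_{j=1}^{i−2} (bᵀl_j − bᵀl_{j+1})·cᵀζ̃_j(t)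 + b·(bᵀl₁)·n(t) + b·(F*)'(t). -/

import Mathlib

open Matrix

noncomputable section

/-- System matrix `A` of the extended error-domain state. -/
def Amat : Matrix (Fin 3) (Fin 3) ℝ := !![0,1,0; 0,0,1; 0,0,0]

/-- Vector `b = (0,0,1)ᵀ`. -/
def bvec : Fin 3 → ℝ := ![0,0,1]

/-- Vector `c = (1,0,0)ᵀ`. -/
def cvec : Fin 3 → ℝ := ![1,0,0]

/-- Vector `d = (0,1,0)ᵀ`. -/
def dvec : Fin 3 → ℝ := ![0,1,0]

/-- Bandwidth-parameterized observer gain `l(ω) = (3ω, 3ω², ω³)ᵀ`. -/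
def gain (ω : ℝ) : Fin 3 → ℝ := ![3 * ω, 3 * ω ^ 2, ω ^ 3]

/-- Level-`i` observation error `ζ̃ᵢ = z − ξᵢ − b (bᵀ ∑_{j=1}^{i-1} ξⱼ)`. -/
def zetaErr (e e' F : ℝ → ℝ) (ξ : ℕ → ℝ → Fin 3 → ℝ) (i : ℕ) (t : ℝ) : Fin 3 → ℝ :=
  ![e t, e' t, F t] - ξ i t - (bvec ⬝ᵥ ∑ j ∈ Finset.Icc 1 (i - 1), ξ j t) • bvec

/-- dynamics of the level-`i` (i ≥ 2) observation errors of the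
`p`-level cascade extended state observer. -/
theorem cascade_observation_error_dynamics
    (p : ℕ) (hp : 2 ≤ p) (ω₁ : ℝ) (hω₁ : 0 < ω₁) (α : ℝ) (hα : 1 < α)
    (bhat : ℝ) (hbhat : bhat ≠ 0)
    (μ n e e' e'' F F' : ℝ → ℝ)
    (he : ∀ t : ℝ, HasDerivAt e (e' t) t)
    (he' : ∀ t : ℝ, HasDerivAt e' (e'' t) t)
    (hF : ∀ t : ℝ, HasDerivAt F (F' t) t)
    (hdyn : ∀ t : ℝ, e'' t = F t - bhat * μ t)
    (ξ ξ' : ℕ → ℝ → Fin 3 → ℝ)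
    (hξ : ∀ i : ℕ, 1 ≤ i → i ≤ p → ∀ t : ℝ, HasDerivAt (ξ i) (ξ' i t) t)
    (hobs1 : ∀ t : ℝ, ξ' 1 t =
      Amat.mulVec (ξ 1 t) - (bhat * μ t) • dvec
        + (((e t - n t) - cvec ⬝ᵥ ξ 1 t)) • gain (α ^ (1 - 1) * ω₁))
    (hobsi : ∀ i : ℕ, 2 ≤ i → i ≤ p → ∀ t : ℝ, ξ' i t =
      Amat.mulVec (ξ i t)
        + (-(bhat * μ t) + bvec ⬝ᵥ ∑ j ∈ Finset.Icc 1 (i - 1), ξ j t) • dvec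
        + (cvec ⬝ᵥ (ξ (i - 1) t - ξ i t)) • gain (α ^ (i - 1) * ω₁)) :
    ∀ i : ℕ, 2 ≤ i → i ≤ p → ∀ t : ℝ,
      HasDerivAt (fun s => zetaErr e e' F ξ i s)
        ((Amat - vecMulVec (gain (α ^ (i - 1) * ω₁)) cvec).mulVec (zetaErr e e' F ξ i t)
          + (cvec ⬝ᵥ zetaErr e e' F ξ (i - 1) t) •
              (gain (α ^ (i - 1) * ω₁) - (bvec ⬝ᵥ gain (α ^ (i - 1 - 1) * ω₁)) • bvec)
          - ∑ j ∈ Finset.Icc 1 (i - 2),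
              ((bvec ⬝ᵥ gain (α ^ (j - 1) * ω₁) - bvec ⬝ᵥ gain (α ^ (j + 1 - 1) * ω₁)) *
                (cvec ⬝ᵥ zetaErr e e' F ξ j t)) • bvec
          + ((bvec ⬝ᵥ gain (α ^ (1 - 1) * ω₁)) * n t) • bvec
          + F' t • bvec) t := by

  intro i hi2 hip t
  obtain ⟨m, rfl⟩ : ∃ m, i = m + 2 := ⟨i - 2, by omega⟩
  -- key telescoping identity for the third components of the observer derivatives
  have key : ∀ k : ℕ, 1 ≤ k → k + 1 ≤ p → ∀ s : ℝ,
      ∑ j ∈ Finset.Icc 1 k, ξ' j s 2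
        = (e s - ξ k s 0) * (α ^ (k - 1) * ω₁) ^ 3
          + ∑ j ∈ Finset.Icc 1 (k - 1),
              ((α ^ (j - 1) * ω₁) ^ 3 - (α ^ j * ω₁) ^ 3) * (e s - ξ j s 0)
          - (α ^ (0 : ℕ) * ω₁) ^ 3 * n s := by
    intro k hk
    induction k, hk using Nat.le_induction with
    | base =>
      intro hkp s
      simp only [Finset.Icc_self, Finset.sum_singleton, hobs1 s, Nat.sub_self,
        Finset.Icc_eq_empty_of_lt (by omega : (1:ℕ) > 0), Finset.sum_empty]
      simp [Amat, cvec, dvec, gain, Matrix.mulVec, dotProduct, Fin.sum_univ_three]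
      ring
    | succ k hk1 ih =>
      intro hkp s
      obtain ⟨k', rfl⟩ : ∃ k', k = k' + 1 := ⟨k - 1, by omega⟩
      have ih' := ih (by omega) s
      rw [Finset.sum_Icc_succ_top (by omega : 1 ≤ k' + 1 + 1), ih',
        Nat.add_sub_cancel, Nat.add_sub_cancel,
        Finset.sum_Icc_succ_top (by omega : 1 ≤ k' + 1),
        hobsi (k' + 1 + 1) (by omega) (by omega) s]
      simp only [Nat.add_sub_cancel]
      simp [Amat, cvec, dvec, gain, Matrix.mulVec, dotProduct, Fin.sum_univ_three]
      ring
  have hkey := key (m + 1) (by omega) (by omega) t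
  simp only [Nat.add_sub_cancel] at hkey
  refine hasDerivAt_pi.2 fun k => ?_
  have h1 : HasDerivAt (fun s => ![e s, e' s, F s] k) (![e' t, e'' t, F' t] k) t := by
    fin_cases k
    · simpa using he t
    · simpa using he' t
    · simpa using hF t
  have h2 : HasDerivAt (fun s => ξ (m + 2) s k) (ξ' (m + 2) t k) t :=
    hasDerivAt_pi.1 (hξ (m + 2) (by omega) hip t) k
  have h3 : HasDerivAt (fun s => ∑ j ∈ Finset.Icc 1 (m + 1), ξ j s 2)
      (∑ j ∈ Finset.Icc 1 (m + 1), ξ' j t 2) t := by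
    refine HasDerivAt.fun_sum fun j hj => ?_
    rw [Finset.mem_Icc] at hj
    exact hasDerivAt_pi.1 (hξ j hj.1 (by omega) t) 2
  have hd := (h1.sub h2).sub (h3.mul_const (bvec k))
  have hfun : (fun x => zetaErr e e' F ξ (m + 2) x k)
      = fun s => ![e s, e' s, F s] k - ξ (m + 2) s k
          - (∑ j ∈ Finset.Icc 1 (m + 1), ξ j s 2) * bvec k := by
    funext s
    fin_cases k <;>
      simp [zetaErr, bvec, dotProduct, Fin.sum_univ_three, Finset.sum_apply,
        Matrix.vecHead, Matrix.vecTail, show m + 2 - 1 = m + 1 from rfl]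
  rw [show (fun x => zetaErr e e' F ξ (m + 2) x k) = _ from hfun]
  convert hd using 1
  · rfl
  rw [hobsi (m + 2) (by omega) hip t]
  simp only [show m + 2 - 1 = m + 1 from rfl, show m + 2 - 2 = m from rfl,
    show m + 1 - 1 = m from rfl]
  fin_cases k <;>
    simp [zetaErr, Amat, bvec, cvec, dvec, gain, Matrix.mulVec, dotProduct,
      Matrix.vecMulVec_apply, Fin.sum_univ_three, Finset.sum_apply, Pi.add_apply,
      Pi.sub_apply, Pi.smul_apply, smul_eq_mul, Matrix.sub_apply, Matrix.of_apply,
      Matrix.cons_val', Matrix.cons_val_zero, Matrix.cons_val_one, Matrix.head_cons,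
      Matrix.empty_val', Matrix.cons_val_fin_one, Matrix.head_fin_const,
      Matrix.cons_val_two, Matrix.tail_cons, Matrix.vecHead, Matrix.vecTail,
      Function.comp_apply, Nat.add_sub_cancel, hdyn t,
      show m + 2 - 1 = m + 1 from rfl, show m + 1 - 1 = m from rfl]
  all_goals try ring
  simp only [show 1 + m = m + 1 from Nat.add_comm 1 m, show 2 + m = m + 2 from Nat.add_comm 2 m]
  have hs : ∑ x ∈ Finset.Icc 1 m, ((α ^ (x - 1) * ω₁) ^ 3 - (α ^ x * ω₁) ^ 3) * (e t - ξ x t 0)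
      = ∑ x ∈ Finset.Icc 1 m,
          (e t * α ^ ((x - 1) * 3) * ω₁ ^ 3 - e t * α ^ (x * 3) * ω₁ ^ 3 - α ^ ((x - 1) * 3) * ω₁ ^ 3 * ξ x t 0 +
            α ^ (x * 3) * ω₁ ^ 3 * ξ x t 0) :=
    Finset.sum_congr rfl fun x _ => by ring
  linear_combination hkey + hs
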